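/- Let H be a real Hilbert space and T : H → H a nonexpansive map (i.e. ‖T u − T v‖ ≤ ‖u − v‖ for all u, v ∈ H) whose set of fixed points is nonempty. Let (κ_n) be a sequence in (0,1] with ∑_{n=0}^∞ κ_n (1 − κ_n) = ∞, fix f_0 ∈ H, and define the Krasnoselskii–Mann iterates f_{n+1} = (1 − κ_n) f_n + κ_n T f_n. Then the sequence (f_n) converges weakly in H to a fixed point of T. -/

import Mathlib

open scoped RealInnerProductSpace

open Filter in
private lemma km_combo_sq {H : Type*} [NormedAddCommGroup H] [InnerProductSpace ℝ H]
    (a b : H) (c : ℝ) :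
    ‖(1-c)•a + c•b‖^2 = (1-c)*‖a‖^2 + c*‖b‖^2 - c*(1-c)*‖a-b‖^2 := by
  have h1 := norm_add_sq_real ((1-c)•a) (c•b)
  have h2 := norm_sub_sq_real a b
  rw [real_inner_smul_left, real_inner_smul_right, norm_smul, norm_smul,
    Real.norm_eq_abs, Real.norm_eq_abs] at h1
  rw [h1, h2, mul_pow, mul_pow, sq_abs, sq_abs]
  ring

open Filter in
private lemma km_fejer {H : Type*} [NormedAddCommGroup H] [InnerProductSpace ℝ H]
    (T : H → H) (hT : ∀ u v : H, ‖T u - T v‖ ≤ ‖u - v‖)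
    (κ : ℕ → ℝ) (hκ : ∀ n, κ n ∈ Set.Ioc (0 : ℝ) 1)
    (f : ℕ → H) (hrec : ∀ n, f (n + 1) = (1 - κ n) • f n + κ n • T (f n))
    (p : H) (hp : T p = p) (n : ℕ) :
    ‖f (n+1) - p‖^2 ≤ ‖f n - p‖^2 - κ n * (1 - κ n) * ‖f n - T (f n)‖^2 := by
  obtain ⟨hκ0, hκ1⟩ := hκ n
  have hsplit : f (n+1) - p = (1 - κ n) • (f n - p) + κ n • (T (f n) - p) := by
    rw [hrec n]; module
  have hdiff : (f n - p) - (T (f n) - p) = f n - T (f n) := by module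
  have hident := km_combo_sq (f n - p) (T (f n) - p) (κ n)
  rw [hdiff] at hident
  rw [hsplit, hident]
  have hne : ‖T (f n) - p‖ ≤ ‖f n - p‖ := by
    calc ‖T (f n) - p‖ = ‖T (f n) - T p‖ := by rw [hp]
    _ ≤ ‖f n - p‖ := hT _ _
  have hsq : ‖T (f n) - p‖^2 ≤ ‖f n - p‖^2 := by
    nlinarith [norm_nonneg (T (f n) - p), norm_nonneg (f n - p)]
  nlinarith [mul_le_mul_of_nonneg_left hsq hκ0.le]

open Filter in
private lemma km_res_antitone {H : Type*} [NormedAddCommGroup H] [InnerProductSpace ℝ H]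
    (T : H → H) (hT : ∀ u v : H, ‖T u - T v‖ ≤ ‖u - v‖)
    (κ : ℕ → ℝ) (hκ : ∀ n, κ n ∈ Set.Ioc (0 : ℝ) 1)
    (f : ℕ → H) (hrec : ∀ n, f (n + 1) = (1 - κ n) • f n + κ n • T (f n)) :
    Antitone (fun n => ‖f n - T (f n)‖) := by
  refine antitone_nat_of_succ_le (fun n => ?_)
  obtain ⟨hκ0, hκ1⟩ := hκ n
  have h1 : f (n+1) - T (f (n+1)) = (1 - κ n) • (f n - T (f n)) + (T (f n) - T (f (n+1))) := by
    rw [hrec n]; module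
  have h2 : f (n+1) - f n = κ n • (T (f n) - f n) := by rw [hrec n]; module
  have h3 : ‖T (f n) - T (f (n+1))‖ ≤ ‖f n - f (n+1)‖ := hT _ _
  have h4 : ‖f n - f (n+1)‖ = κ n * ‖f n - T (f n)‖ := by
    rw [← norm_neg, neg_sub, h2, norm_smul, Real.norm_eq_abs, abs_of_pos hκ0, ← norm_neg, neg_sub]
  calc ‖f (n+1) - T (f (n+1))‖
      ≤ ‖(1 - κ n) • (f n - T (f n))‖ + ‖T (f n) - T (f (n+1))‖ := by
        rw [h1]; exact norm_add_le _ _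
    _ ≤ (1 - κ n) * ‖f n - T (f n)‖ + κ n * ‖f n - T (f n)‖ := by
        rw [norm_smul, Real.norm_eq_abs, abs_of_nonneg (by linarith)]
        exact add_le_add_right (h3.trans_eq h4) _
    _ = ‖f n - T (f n)‖ := by ring

open Filter in
private lemma km_exists_weak_lim {H : Type*} [NormedAddCommGroup H] [InnerProductSpace ℝ H]
    [CompleteSpace H] (f : ℕ → H) (C : ℝ) (hC : ∀ n, ‖f n‖ ≤ C) (U : Ultrafilter ℕ) :
    ∃ p : H, ∀ h : H, Tendsto (fun n => ⟪f n, h⟫) (U : Filter ℕ) (nhds ⟪p, h⟫) := by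
  have habs : ∀ h : H, ∀ n, |⟪f n, h⟫| ≤ C * ‖h‖ := fun h n =>
    (abs_real_inner_le_norm (f n) h).trans
      (mul_le_mul_of_nonneg_right (hC n) (norm_nonneg h))
  have key : ∀ h : H, ∃ L : ℝ, Tendsto (fun n => ⟪f n, h⟫) (U : Filter ℕ) (nhds L) := by
    intro h
    have hle : (U.map (fun n => ⟪f n, h⟫) : Filter ℝ) ≤ 𝓟 (Set.Icc (-(C*‖h‖)) (C*‖h‖)) := by
      rw [Filter.le_principal_iff, Ultrafilter.coe_map, Filter.mem_map]
      exact Filter.univ_mem' (fun n => Set.mem_Icc.mpr (abs_le.mp (habs h n)))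
    obtain ⟨Lh, _, hL⟩ := isCompact_Icc.ultrafilter_le_nhds (U.map _) hle
    exact ⟨Lh, hL⟩
  choose L hL using key
  have hadd : ∀ h₁ h₂, L (h₁ + h₂) = L h₁ + L h₂ := by
    intro h₁ h₂
    refine tendsto_nhds_unique ?_ ((hL h₁).add (hL h₂))
    have : (fun n => ⟪f n, h₁⟫ + ⟪f n, h₂⟫) = fun n => ⟪f n, h₁ + h₂⟫ := by
      funext n; rw [inner_add_right]
    rw [this]; exact hL _
  have hsmul : ∀ (c : ℝ) h, L (c • h) = c * L h := by
    intro c h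
    refine tendsto_nhds_unique ?_ ((hL h).const_mul c)
    have : (fun n => c * ⟪f n, h⟫) = fun n => ⟪f n, c • h⟫ := by
      funext n; rw [real_inner_smul_right]
    rw [this]; exact hL _
  have hbound : ∀ h, |L h| ≤ C * ‖h‖ := by
    intro h
    exact le_of_tendsto (hL h).abs (Filter.Eventually.of_forall (habs h))
  let φ : H →ₗ[ℝ] ℝ := { toFun := L, map_add' := hadd, map_smul' := hsmul }
  let φc : H →L[ℝ] ℝ := φ.mkContinuous C (fun h => by
    simpa [φ, Real.norm_eq_abs] using hbound h)
  refine ⟨(InnerProductSpace.toDual ℝ H).symm φc, fun h => ?_⟩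
  have : ⟪(InnerProductSpace.toDual ℝ H).symm φc, h⟫ = φc h := by
    simp [InnerProductSpace.toDual_symm_apply]
  rw [this]
  exact hL h

open Filter in
private lemma km_demiclosed {H : Type*} [NormedAddCommGroup H] [InnerProductSpace ℝ H]
    (T : H → H) (hT : ∀ u v : H, ‖T u - T v‖ ≤ ‖u - v‖)
    (f : ℕ → H) (C : ℝ) (hC : ∀ n, ‖f n‖ ≤ C) (U : Ultrafilter ℕ)
    (hD : Tendsto (fun n => ‖f n - T (f n)‖) (U : Filter ℕ) (nhds 0))
    (p : H) (hp : ∀ h : H, Tendsto (fun n => ⟪f n, h⟫) (U : Filter ℕ) (nhds ⟪p, h⟫)) :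
    T p = p := by
  set q := T p with hq
  have key : ‖p - q‖^2 ≤ 0 := by
    have hid : ∀ n, ‖f n - q‖^2 - ‖f n - p‖^2 = 2*⟪f n, p - q⟫ + ‖q‖^2 - ‖p‖^2 := by
      intro n
      rw [norm_sub_sq_real, norm_sub_sq_real, inner_sub_right]; ring
    have hlim : Tendsto (fun n => ‖f n - q‖^2 - ‖f n - p‖^2) (U : Filter ℕ)
        (nhds (‖p - q‖^2)) := by
      have h1 : Tendsto (fun n => 2*⟪f n, p - q⟫ + ‖q‖^2 - ‖p‖^2) (U : Filter ℕ)
          (nhds (2*⟪p, p - q⟫ + ‖q‖^2 - ‖p‖^2)) :=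
        (((hp (p - q)).const_mul 2).add_const _).sub_const _
      have h2 : 2*⟪p, p - q⟫ + ‖q‖^2 - ‖p‖^2 = ‖p - q‖^2 := by
        rw [norm_sub_sq_real, inner_sub_right, real_inner_self_eq_norm_sq]; ring
      rw [h2] at h1
      exact h1.congr (fun n => (hid n).symm)
    have hub : ∀ n, ‖f n - q‖^2 - ‖f n - p‖^2 ≤
        ‖f n - T (f n)‖*‖f n - T (f n)‖ + 2*(C + ‖p‖)*‖f n - T (f n)‖ := by
      intro n
      have h1 : ‖f n - q‖ ≤ ‖f n - T (f n)‖ + ‖f n - p‖ := by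
        calc ‖f n - q‖ ≤ ‖f n - T (f n)‖ + ‖T (f n) - q‖ :=
          norm_sub_le_norm_sub_add_norm_sub _ _ _
        _ ≤ ‖f n - T (f n)‖ + ‖f n - p‖ := add_le_add_right (hT (f n) p) _
      have h2 : ‖f n - p‖ ≤ C + ‖p‖ := (norm_sub_le _ _).trans (add_le_add_left (hC n) _)
      nlinarith [norm_nonneg (f n - q), norm_nonneg (f n - T (f n)), norm_nonneg (f n - p)]
    have hub_lim : Tendsto (fun n => ‖f n - T (f n)‖*‖f n - T (f n)‖
        + 2*(C + ‖p‖)*‖f n - T (f n)‖) (U : Filter ℕ) (nhds 0) := by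
      have := (hD.mul hD).add (hD.const_mul (2*(C + ‖p‖)))
      simpa [mul_comm] using this
    exact le_of_tendsto_of_tendsto' hlim hub_lim hub
  have h0 : ‖p - q‖ = 0 := by nlinarith [norm_nonneg (p - q)]
  have h1 : p - q = 0 := norm_eq_zero.mp h0
  rw [hq] at h1 ⊢
  linear_combination (norm := module) -h1

open Filter in
/-- Krasnoselskii–Mann iterates of a nonexpansive map with nonempty fixed point set
converge weakly to a fixed point. -/
theorem stmt_0 (H : Type*) [NormedAddCommGroup H] [InnerProductSpace ℝ H] [CompleteSpace H]
    (T : H → H) (hT : ∀ u v : H, ‖T u - T v‖ ≤ ‖u - v‖)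
    (hfix : ∃ p : H, T p = p)
    (κ : ℕ → ℝ) (hκ : ∀ n, κ n ∈ Set.Ioc (0 : ℝ) 1)
    (hdiv : Filter.Tendsto (fun N => ∑ n ∈ Finset.range N, κ n * (1 - κ n))
      Filter.atTop Filter.atTop)
    (f : ℕ → H) (f₀ : H) (hf0 : f 0 = f₀)
    (hrec : ∀ n, f (n + 1) = (1 - κ n) • f n + κ n • T (f n)) :
    ∃ p : H, T p = p ∧
      ∀ h : H, Filter.Tendsto (fun n => ⟪f n, h⟫) Filter.atTop (nhds ⟪p, h⟫) := by
  obtain ⟨p₀, hp₀⟩ := hfix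
  set D := fun n => ‖f n - T (f n)‖ with hD
  have hfe := km_fejer T hT κ hκ f hrec
  -- monotone norm squares for fixed points
  have hmono : ∀ p, T p = p → Antitone (fun n => ‖f n - p‖^2) := by
    intro p hp
    refine antitone_nat_of_succ_le (fun n => ?_)
    obtain ⟨hκ0, hκ1⟩ := hκ n
    have := hfe p hp n
    have hnn : 0 ≤ κ n * (1 - κ n) * ‖f n - T (f n)‖^2 :=
      mul_nonneg (mul_nonneg hκ0.le (by linarith)) (sq_nonneg _)
    simpa using this.trans (by linarith)
  -- uniform bound
  have hCb : ∀ n, ‖f n‖ ≤ ‖f 0 - p₀‖ + ‖p₀‖ := by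
    intro n
    have h1 : ‖f n - p₀‖^2 ≤ ‖f 0 - p₀‖^2 := hmono p₀ hp₀ (Nat.zero_le n)
    have h2 : ‖f n - p₀‖ ≤ ‖f 0 - p₀‖ := by
      nlinarith [norm_nonneg (f n - p₀), norm_nonneg (f 0 - p₀)]
    calc ‖f n‖ = ‖(f n - p₀) + p₀‖ := by rw [sub_add_cancel]
    _ ≤ ‖f n - p₀‖ + ‖p₀‖ := norm_add_le _ _
    _ ≤ ‖f 0 - p₀‖ + ‖p₀‖ := add_le_add_left h2 _
  set C := ‖f 0 - p₀‖ + ‖p₀‖ with hCdef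
  -- residual tends to 0
  have hanti := km_res_antitone T hT κ hκ f hrec
  have hbdd : BddBelow (Set.range D) := ⟨0, by rintro x ⟨n, rfl⟩; exact norm_nonneg _⟩
  have hDlim : Tendsto D atTop (nhds (⨅ n, D n)) := tendsto_atTop_ciInf hanti hbdd
  set L := ⨅ n, D n with hLdef
  have hL0 : 0 ≤ L := le_ciInf fun n => norm_nonneg _
  have hLle : ∀ n, L ≤ D n := fun n => ciInf_le hbdd n
  have htel : ∀ N, L^2 * ∑ n ∈ Finset.range N, κ n * (1 - κ n) ≤ ‖f 0 - p₀‖^2 := by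
    intro N
    have h1 : ∑ n ∈ Finset.range N, L^2 * (κ n * (1 - κ n)) ≤
        ∑ n ∈ Finset.range N,
          ((fun k => ‖f k - p₀‖^2) n - (fun k => ‖f k - p₀‖^2) (n+1)) := by
      refine Finset.sum_le_sum (fun n _ => ?_)
      obtain ⟨hκ0, hκ1⟩ := hκ n
      have hDn := hLle n
      have hcoef : 0 ≤ κ n * (1 - κ n) := mul_nonneg hκ0.le (by linarith)
      have hLsq : L^2 ≤ D n^2 := by nlinarith
      have := hfe p₀ hp₀ n
      have h2 : κ n * (1 - κ n) * L^2 ≤ κ n * (1 - κ n) * D n^2 :=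
        mul_le_mul_of_nonneg_left hLsq hcoef
      simp only [hD] at this h2 ⊢
      nlinarith
    rw [Finset.sum_range_sub'] at h1
    rw [← Finset.mul_sum] at h1
    have h3 : 0 ≤ ‖f N - p₀‖^2 := sq_nonneg _
    simpa using h1.trans (by simpa using (by linarith : ‖f 0 - p₀‖^2 - ‖f N - p₀‖^2 ≤ ‖f 0 - p₀‖^2))
  have hLzero : L = 0 := by
    by_contra hne
    have hLpos : 0 < L := lt_of_le_of_ne hL0 (Ne.symm hne)
    obtain ⟨N, hN⟩ := (hdiv.eventually_gt_atTop (‖f 0 - p₀‖^2 / L^2)).exists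
    have hL2 : 0 < L^2 := by positivity
    have := htel N
    have h4 : L^2 * (‖f 0 - p₀‖^2 / L^2) < L^2 * ∑ n ∈ Finset.range N, κ n * (1 - κ n) :=
      mul_lt_mul_of_pos_left hN hL2
    rw [mul_div_cancel₀ _ (ne_of_gt hL2)] at h4
    linarith
  have hD0 : Tendsto D atTop (nhds 0) := hLzero ▸ hDlim
  -- limits of squared distances to fixed points
  have hnsq : ∀ p, T p = p → ∃ l, Tendsto (fun n => ‖f n - p‖^2) atTop (nhds l) := by
    intro p hp
    exact ⟨_, tendsto_atTop_ciInf (hmono p hp)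
      ⟨0, by rintro x ⟨n, rfl⟩; exact sq_nonneg _⟩⟩
  -- weak limit along an ultrafilter
  obtain ⟨U, hU⟩ := exists_ultrafilter_le (atTop : Filter ℕ)
  obtain ⟨p, hp⟩ := km_exists_weak_lim f C hCb U
  have hpfix : T p = p := km_demiclosed T hT f C hCb U (hD0.mono_left hU) p hp
  refine ⟨p, hpfix, ?_⟩
  by_contra hcon
  push_neg at hcon
  obtain ⟨h, hh⟩ := hcon
  rw [Metric.tendsto_atTop] at hh
  push_neg at hh
  obtain ⟨ε, hε, hfreq⟩ := hh
  have hneb : (atTop ⊓ 𝓟 {n | ε ≤ dist (⟪f n, h⟫) (⟪p, h⟫)}).NeBot := by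
    rw [← Filter.frequently_iff_neBot, Filter.frequently_atTop]
    intro N
    obtain ⟨n, hn1, hn2⟩ := hfreq N
    exact ⟨n, hn1, hn2⟩
  obtain ⟨U', hU'⟩ := @exists_ultrafilter_le _ _ hneb
  have hU'top : (U' : Filter ℕ) ≤ atTop := hU'.trans inf_le_left
  obtain ⟨p', hp'⟩ := km_exists_weak_lim f C hCb U'
  have hp'fix : T p' = p' := km_demiclosed T hT f C hCb U' (hD0.mono_left hU'top) p' hp'
  have hsep : ε ≤ dist (⟪p', h⟫) (⟪p, h⟫) := by
    have hmem : {n | ε ≤ dist (⟪f n, h⟫) (⟪p, h⟫)} ∈ (U' : Filter ℕ) :=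
      Filter.le_principal_iff.mp (hU'.trans inf_le_right)
    exact ge_of_tendsto ((hp' h).dist tendsto_const_nhds) hmem
  -- uniqueness of the weak limit
  obtain ⟨l, hl⟩ := hnsq p hpfix
  obtain ⟨l', hl'⟩ := hnsq p' hp'fix
  have hident : ∀ n, ‖f n - p‖^2 - ‖f n - p'‖^2 =
      -2*⟪f n, p - p'⟫ + ‖p‖^2 - ‖p'‖^2 := by
    intro n
    rw [norm_sub_sq_real, norm_sub_sq_real, inner_sub_right]; ring
  have t1 : Tendsto (fun n => ‖f n - p‖^2 - ‖f n - p'‖^2) atTop (nhds (l - l')) := hl.sub hl'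
  have e1 : l - l' = -2*⟪p, p - p'⟫ + ‖p‖^2 - ‖p'‖^2 := by
    have hrhs : Tendsto (fun n => -2*⟪f n, p - p'⟫ + ‖p‖^2 - ‖p'‖^2) (U : Filter ℕ)
        (nhds (-2*⟪p, p - p'⟫ + ‖p‖^2 - ‖p'‖^2)) :=
      (((hp (p - p')).const_mul (-2)).add_const _).sub_const _
    exact tendsto_nhds_unique (t1.mono_left hU) (hrhs.congr (fun n => (hident n).symm))
  have e2 : l - l' = -2*⟪p', p - p'⟫ + ‖p‖^2 - ‖p'‖^2 := by
    have hrhs : Tendsto (fun n => -2*⟪f n, p - p'⟫ + ‖p‖^2 - ‖p'‖^2) (U' : Filter ℕ)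
        (nhds (-2*⟪p', p - p'⟫ + ‖p‖^2 - ‖p'‖^2)) :=
      (((hp' (p - p')).const_mul (-2)).add_const _).sub_const _
    exact tendsto_nhds_unique (t1.mono_left hU'top) (hrhs.congr (fun n => (hident n).symm))
  have e3 : ⟪p - p', p - p'⟫ = 0 := by
    rw [inner_sub_left]; linarith
  have e4 : p = p' := sub_eq_zero.mp (inner_self_eq_zero.mp e3)
  rw [e4] at hsep
  simp at hsep
  linarith
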